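/- arXiv:1601.07988 — 2 statements merged into one kernel-verified Lean document; each statement's English description precedes it below -/
import Mathlib

section
/- For every n ≥ 1, the number of words L ∈ 𝓛_n that bounce off the diagonal an even number of times equals 2·binom(2n−2, n−1). -/
/-!
Words over the alphabet {E, N} are encoded as `List Bool`,
with `true` representing an east step `E` and `false` a north step `N`.
The word `w = w_1 ⋯ w_{2n}` corresponds to the lattice path from `(0,0)` to
`(n,n)` whose `j`-th step is east if `w_j = true` and north if `w_j = false`.
-/

/-- `w ∈ 𝓛_n`: the word `w` has exactly `n` `E`'s and `n` `N`'s. -/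
def memL (n : ℕ) (w : List Bool) : Prop :=
  w.count true = n ∧ w.count false = n

/-- The (0-indexed, increasing) list of positions at which the letter `b` occurs in `w`. -/
def occPos (w : List Bool) (b : Bool) : List ℕ :=
  (List.range w.length).filter (fun j => w.getD j (!b) == b)

/-- `ps_w({i, i+1})` (with `i` 1-indexed): the length-4 word obtained from `w` by
deleting, for each `j ∉ {i, i+1}`, the `j`-th occurrence of `E` and the `j`-th
occurrence of `N` (counted from left to right); i.e. the word formed by the
`i`-th and `(i+1)`-th occurrences of `E` and of `N`, read in their original order. -/
def pairedSubword (w : List Bool) (i : ℕ) : List Bool :=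
  let keep : List ℕ := [(occPos w true).getD (i-1) 0, (occPos w true).getD i 0,
                        (occPos w false).getD (i-1) 0, (occPos w false).getD i 0]
  ((List.range w.length).filter (fun j => keep.contains j)).map (fun j => w.getD j true)

/-- `P`-mch(w): the number of paired steps `i` with `1 ≤ i ≤ n-1` at which the
paired pattern `P` matches in `w ∈ 𝓛_n`. -/
def pmch (n : ℕ) (P w : List Bool) : ℕ :=
  ((Finset.Icc 1 (n-1)).filter (fun i => pairedSubword w i = P)).card

def P1 : List Bool := [true, true, false, false]   -- EENN
def P2 : List Bool := [true, false, true, false]   -- ENEN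
def P3 : List Bool := [false, true, true, false]   -- NEEN
def P4 : List Bool := [true, false, false, true]   -- ENNE
def P5 : List Bool := [false, true, false, true]   -- NENE
def P6 : List Bool := [false, false, true, true]   -- NNEE

/-- The path of `w` passes through the interior diagonal point `[i,i]`:
the prefix `w_1 ⋯ w_{2i}` contains exactly `i` `E`'s and `i` `N`'s. -/
abbrev onDiag (w : List Bool) (i : ℕ) : Prop :=
  (w.take (2*i)).count true = i ∧ (w.take (2*i)).count false = i

/-- The number of crossings of the diagonal: interior diagonal points `[i,i]` with
`w_{2i} = w_{2i+1}`. -/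
def crossCount (n : ℕ) (w : List Bool) : ℕ :=
  ((Finset.Icc 1 (n-1)).filter (fun i =>
    onDiag w i ∧ w.getD (2*i-1) false = w.getD (2*i) false)).card

/-- The number of bounces off the diagonal: interior diagonal points `[i,i]` with
`w_{2i} ≠ w_{2i+1}`. -/
def bounceCount (n : ℕ) (w : List Bool) : ℕ :=
  ((Finset.Icc 1 (n-1)).filter (fun i =>
    onDiag w i ∧ w.getD (2*i-1) false ≠ w.getD (2*i) false)).card

set_option maxRecDepth 8000

namespace EvenBounce

def S (w : List Bool) (j : ℕ) : ℤ := ((w.take j).count true : ℤ) - ((w.take j).count false : ℤ)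

lemma count_add_count (l : List Bool) : l.count true + l.count false = l.length := by
  induction l with
  | nil => simp
  | cons a l ih => cases a <;> simp [List.count_cons] <;> omega

lemma S_zero (w : List Bool) : S w 0 = 0 := by simp [S]

lemma S_succ (w : List Bool) (j : ℕ) (h : j < w.length) :
    S w (j+1) = S w j + (if w[j] then 1 else -1) := by
  have : w.take (j+1) = w.take j ++ [w[j]] := by
    rw [List.take_succ, List.getElem?_eq_getElem h]
    rfl
  rw [S, S, this]
  cases hb : w[j] <;>
    · rw [List.count_append, List.count_append]
      simp
      ring

lemma S_eq_two_count (w : List Bool) (j : ℕ) (h : j ≤ w.length) :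
    S w j = 2*((w.take j).count true : ℤ) - j := by
  have h1 := count_add_count (w.take j)
  have h2 : (w.take j).length = j := by simp [h]
  rw [S]; omega

lemma onDiag_iff_S (w : List Bool) (i : ℕ) (h : 2*i ≤ w.length) :
    onDiag w i ↔ S w (2*i) = 0 := by
  have h1 := count_add_count (w.take (2*i))
  have h2 : (w.take (2*i)).length = 2*i := by simp [h]
  rw [onDiag, S]; omega

lemma memL_iff (n : ℕ) (w : List Bool) :
    memL n w ↔ w.length = 2*n ∧ w.count true = n := by
  have := count_add_count w
  rw [memL]; omega

lemma memL_length (n : ℕ) (w : List Bool) (h : memL n w) : w.length = 2*n :=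
  ((memL_iff n w).1 h).1

lemma memL_S (n : ℕ) (w : List Bool) (h : memL n w) : S w (2*n) = 0 := by
  obtain ⟨h1, h2⟩ := h
  rw [S, ← memL_length n w ⟨h1, h2⟩, List.take_length, h1, h2, sub_self]

end EvenBounce

namespace EvenBounce2
open EvenBounce

lemma S_take (w : List Bool) (j i : ℕ) (h : i ≤ j) : S (w.take j) i = S w i := by
  rw [S, S, List.take_take, min_eq_left h]

lemma S_add (w : List Bool) (k j : ℕ) :
    S w (k + j) = S w k + S (w.drop k) j := by
  rw [S, S, S, List.take_add, List.count_append, List.count_append]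
  push_cast; ring

lemma count_map_not (l : List Bool) :
    (l.map not).count true = l.count false ∧ (l.map not).count false = l.count true := by
  induction l with
  | nil => simp
  | cons a l ih => cases a <;> simp [List.count_cons, ih.1, ih.2]

lemma S_map_not (w : List Bool) (j : ℕ) : S (w.map not) j = - S w j := by
  rw [S, S, ← List.map_take, (count_map_not _).1, (count_map_not _).2]; ring

lemma sign_pos (w : List Bool) (h1 : S w 1 = 1)
    (hz : ∀ t, 1 ≤ t → 2*t < w.length → S w (2*t) ≠ 0) :
    ∀ j, 1 ≤ j → j < w.length → 0 < S w j := by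
  intro j hj hjl
  induction j with
  | zero => omega
  | succ j ih =>
    rcases Nat.eq_or_lt_of_le hj with h | h
    · rw [← h]; omega
    · have hj1 : 1 ≤ j := by omega
      have hjl' : j < w.length := by omega
      have hpos := ih hj1 hjl'
      have hstep := S_succ w j hjl'
      have hge : 0 ≤ S w (j+1) := by
        rcases hb : w[j] <;> rw [hb] at hstep <;> simp at hstep <;> omega
      rcases Nat.lt_or_ge 0 (S w (j+1)).toNat with hlt | hle
      · omega
      · exfalso
        have hS0 : S w (j+1) = 0 := by omega
        have hpar := S_eq_two_count w (j+1) (by omega)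
        set c := ((w.take (j+1)).count true : ℤ)
        have hc : (j+1 : ℤ) = 2*c := by omega
        have hc0 : 0 < c := by omega
        exact hz c.toNat (by omega) (by omega) (by rw [show 2*c.toNat = j+1 by omega]; exact hS0)

lemma arc_ends (w : List Bool) (m : ℕ) (hm : 1 ≤ m) (hL : w.length = 2*m)
    (hS : S w (2*m) = 0)
    (hz : ∀ t, 1 ≤ t → t < m → S w (2*t) ≠ 0) :
    w.getD 0 false ≠ w.getD (2*m-1) false := by
  have h0 : 0 < w.length := by omega
  have hlast : 2*m-1 < w.length := by omega
  rw [List.getD_eq_getElem w false h0, List.getD_eq_getElem w false hlast]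
  -- general claim: if w[0] = true then w[2m-1] = false
  have key : ∀ v : List Bool, v.length = 2*m → S v (2*m) = 0 →
      (∀ t, 1 ≤ t → t < m → S v (2*t) ≠ 0) →
      ∀ (h0' : 0 < v.length) (hl' : 2*m-1 < v.length), v[0] = true → v[2*m-1] = false := by
    intro v hvL hvS hvz h0' hl' hv0
    have h1 : S v 1 = 1 := by
      have := S_succ v 0 h0'
      rw [hv0] at this
      simp [S_zero] at this
      omega
    have hpos : 0 < S v (2*m-1) :=
      sign_pos v h1 (fun t ht htl => hvz t ht (by omega)) (2*m-1) (by omega) (by omega)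
    have hstep := S_succ v (2*m-1) hl'
    rw [show 2*m-1+1 = 2*m by omega] at hstep
    rcases hb : v[2*m-1]
    · rfl
    · exfalso; rw [hb] at hstep; simp at hstep; omega
  rcases hb0 : w[0]
  · -- w[0] = false : apply key to w.map not
    have hmL : (w.map not).length = 2*m := by simpa using hL
    have h0m : 0 < (w.map not).length := by omega
    have hlm : 2*m-1 < (w.map not).length := by omega
    have := key (w.map not) hmL (by rw [S_map_not, hS]; ring)
      (fun t ht htl => by rw [S_map_not]; intro hc; exact hz t ht htl (by omega))
      h0m hlm (by simp [hb0])
    simp at this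
    rw [this]; simp
  · have := key w hL hS hz h0 hlast hb0
    rw [this]; simp

lemma memL_of_S (n : ℕ) (w : List Bool) (hL : w.length = 2*n) (hS : S w (2*n) = 0) :
    memL n w := by
  have h1 := S_eq_two_count w (2*n) (by omega)
  have h2 := count_add_count w
  have h3 : w.take (2*n) = w := by rw [← hL, List.take_length]
  rw [h3] at h1
  constructor <;> omega

lemma getD_drop (w : List Bool) (k j : ℕ) (d : Bool) :
    (w.drop k).getD j d = w.getD (k+j) d := by
  rw [List.getD_eq_getElem?_getD, List.getD_eq_getElem?_getD, List.getElem?_drop]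

lemma getD_take (w : List Bool) (k j : ℕ) (d : Bool) (h : j < k) :
    (w.take k).getD j d = w.getD j d := by
  rw [List.getD_eq_getElem?_getD, List.getD_eq_getElem?_getD, List.getElem?_take, if_pos h]

lemma cross_parity : ∀ n, 1 ≤ n → ∀ w, memL n w →
    (Even (crossCount n w) ↔ w.getD 0 false ≠ w.getD (2*n-1) false) := by
  intro n
  induction n using Nat.strong_induction_on with
  | _ n IH =>
    intro hn w hw
    have hL : w.length = 2*n := memL_length n w hw
    have hSn : S w (2*n) = 0 := memL_S n w hw
    have hdiag : ∀ i, i ≤ n-1 → (onDiag w i ↔ S w (2*i) = 0) := by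
      intro i hi; exact onDiag_iff_S w i (by omega)
    by_cases hex : ∃ t, 1 ≤ t ∧ t ≤ n-1 ∧ S w (2*t) = 0
    · -- Case B : there is an interior diagonal touch
      classical
      have t := Nat.find hex
      obtain ⟨ht1, htn, htS⟩ := Nat.find_spec hex
      set t := Nat.find hex with htdef
      have hmin : ∀ s, 1 ≤ s → s < t → S w (2*s) ≠ 0 := by
        intro s hs1 hst hcon
        exact Nat.find_min hex hst ⟨hs1, by omega, hcon⟩
      set x := w.drop (2*t) with hxdef
      have hxL : x.length = 2*(n-t) := by simp [hxdef, hL]; omega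
      have hSx : ∀ j, S x j = S w (2*t + j) := by
        intro j
        rw [hxdef]
        have := S_add w (2*t) j
        omega
      have hxmem : memL (n-t) x := by
        apply memL_of_S _ _ hxL
        rw [hSx]
        rw [show 2*t + 2*(n-t) = 2*n by omega]
        exact hSn
      have hgx : ∀ j d, x.getD j d = w.getD (2*t+j) d := fun j d => getD_drop w (2*t) j d
      -- arc lemma on the first block u
      have hu : w.getD 0 false ≠ w.getD (2*t-1) false := by
        have h1 : (w.take (2*t)).length = 2*t := by simp [hL]; omega
        have h2 : S (w.take (2*t)) (2*t) = S w (2*t) := S_take w (2*t) (2*t) le_rfl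
        have h3 : ∀ s, 1 ≤ s → s < t → S (w.take (2*t)) (2*s) ≠ 0 := by
          intro s hs1 hst
          rw [S_take w (2*t) (2*s) (by omega)]
          exact hmin s hs1 hst
        have := arc_ends (w.take (2*t)) t ht1 h1 (h2.trans htS) h3
        rwa [getD_take w (2*t) 0 false (by omega), getD_take w (2*t) (2*t-1) false (by omega)] at this
      -- split the crossCount
      have hsplit : crossCount n w =
          (if w.getD (2*t-1) false = w.getD (2*t) false then 1 else 0)
            + crossCount (n-t) x := by
        rw [crossCount, crossCount]
        have hunion : Finset.Icc 1 (n-1) = Finset.Icc 1 t ∪ Finset.Ioc t (n-1) := by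
          ext i
          simp only [Finset.mem_Icc, Finset.mem_union, Finset.mem_Ioc]
          omega
        rw [hunion, Finset.filter_union, Finset.card_union_of_disjoint]
        · congr 1
          · -- filter over Icc 1 t
            by_cases hc : w.getD (2*t-1) false = w.getD (2*t) false
            · rw [if_pos hc]
              have : (Finset.Icc 1 t).filter (fun i =>
                  onDiag w i ∧ w.getD (2*i-1) false = w.getD (2*i) false) = {t} := by
                ext i
                simp only [Finset.mem_filter, Finset.mem_Icc, Finset.mem_singleton]
                constructor
                · rintro ⟨⟨hi1, hit⟩, hd, _⟩
                  by_contra hne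
                  exact hmin i hi1 (by omega) (((hdiag i (by omega)).1 hd))
                · rintro rfl
                  exact ⟨⟨ht1, le_rfl⟩, (hdiag t (by omega)).2 htS, hc⟩
              rw [this, Finset.card_singleton]
            · rw [if_neg hc]
              have : (Finset.Icc 1 t).filter (fun i =>
                  onDiag w i ∧ w.getD (2*i-1) false = w.getD (2*i) false) = ∅ := by
                ext i
                simp only [Finset.mem_filter, Finset.mem_Icc, Finset.notMem_empty, iff_false]
                rintro ⟨⟨hi1, hit⟩, hd, hceq⟩
                rcases Nat.eq_or_lt_of_le hit with rfl | hlt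
                · exact hc hceq
                · exact hmin i hi1 hlt ((hdiag i (by omega)).1 hd)
              rw [this, Finset.card_empty]
          · -- filter over Ioc t (n-1) ↔ crossCount of x
            apply Finset.card_bij' (fun i _ => i - t) (fun j _ => j + t)
            · intro i hi
              simp only [Finset.mem_filter, Finset.mem_Ioc] at hi
              obtain ⟨⟨hit, hin⟩, hd, hc⟩ := hi
              simp only [Finset.mem_filter, Finset.mem_Icc]
              have e1 : 2*(i-t) = 2*i - 2*t := by omega
              refine ⟨⟨by omega, by omega⟩, ?_, ?_⟩
              · rw [onDiag_iff_S x (i-t) (by omega), hSx, show 2*t + 2*(i-t) = 2*i by omega]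
                exact (hdiag i (by omega)).1 hd
              · rw [hgx, hgx, show 2*t + (2*(i-t)-1) = 2*i-1 by omega,
                  show 2*t + 2*(i-t) = 2*i by omega]
                exact hc
            · intro j hj
              simp only [Finset.mem_filter, Finset.mem_Icc] at hj
              obtain ⟨⟨hj1, hjn⟩, hd, hc⟩ := hj
              simp only [Finset.mem_filter, Finset.mem_Ioc]
              refine ⟨⟨by omega, by omega⟩, ?_, ?_⟩
              · rw [hdiag (j+t) (by omega), show 2*(j+t) = 2*t + 2*j by omega, ← hSx]
                exact (onDiag_iff_S x j (by omega)).1 hd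
              · rw [hgx, hgx, show 2*t + (2*j-1) = 2*(j+t)-1 by omega,
                  show 2*t + 2*j = 2*(j+t) by omega] at hc
                exact hc
            · intro i hi
              simp only [Finset.mem_filter, Finset.mem_Ioc] at hi
              omega
            · intro j hj
              simp only [Finset.mem_filter, Finset.mem_Icc] at hj
              omega
        · rw [Finset.disjoint_left]
          intro i hi1 hi2
          simp only [Finset.mem_filter, Finset.mem_Icc] at hi1
          simp only [Finset.mem_filter, Finset.mem_Ioc] at hi2
          omega
      have hIH := IH (n-t) (by omega) (by omega) x hxmem
      rw [hgx, hgx] at hIH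
      rw [show 2*t + 0 = 2*t by omega, show 2*t + (2*(n-t)-1) = 2*n-1 by omega] at hIH
      rw [hsplit]
      set A := w.getD 0 false
      set B := w.getD (2*t-1) false
      set C := w.getD (2*t) false
      set Z := w.getD (2*n-1) false
      by_cases hBC : B = C
      · rw [if_pos hBC, Nat.add_comm, Nat.even_add_one, hIH]
        revert hu hBC; cases A <;> cases B <;> cases C <;> cases Z <;> simp
      · rw [if_neg hBC, Nat.zero_add, hIH]
        revert hu hBC; cases A <;> cases B <;> cases C <;> cases Z <;> simp
    · -- Case A : no interior touch
      push_neg at hex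
      have hzero : crossCount n w = 0 := by
        rw [crossCount, Finset.card_eq_zero]
        ext i
        simp only [Finset.mem_filter, Finset.mem_Icc, Finset.notMem_empty, iff_false]
        rintro ⟨⟨hi1, hin⟩, hd, _⟩
        exact hex i hi1 hin ((hdiag i hin).1 hd)
      rw [hzero]
      simp only [Even.zero, true_iff]
      exact arc_ends w n hn hL hSn (fun s hs1 hsn => hex s hs1 (by omega))

def DD (n : ℕ) (w : List Bool) : Finset ℕ :=
  (Finset.Icc 1 (n-1)).filter (fun i => onDiag w i)

def cc (n : ℕ) (w : List Bool) (j : ℕ) : ℕ :=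
  ((DD n w).filter (fun t => 2*t ≤ j)).card

def F (n : ℕ) (w : List Bool) : List Bool :=
  w.mapIdx (fun j a => if Even (cc n w j) then a else !a)

lemma F_length (n : ℕ) (w : List Bool) : (F n w).length = w.length := by
  simp [F]

lemma F_getElem (n : ℕ) (w : List Bool) (j : ℕ) (h : j < w.length) :
    (F n w)[j]'(by rw [F_length]; exact h) = if Even (cc n w j) then w[j] else !w[j] := by
  simp [F, List.getElem_mapIdx]

lemma cc_zero (n : ℕ) (w : List Bool) : cc n w 0 = 0 := by
  rw [cc, Finset.card_eq_zero]
  ext t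
  simp only [Finset.mem_filter, DD, Finset.mem_Icc, Finset.notMem_empty, iff_false]
  rintro ⟨⟨⟨ht1, _⟩, _⟩, h2⟩
  omega

lemma mem_DD (n : ℕ) (w : List Bool) (t : ℕ) (hw : memL n w) :
    t ∈ DD n w ↔ (1 ≤ t ∧ t ≤ n-1 ∧ S w (2*t) = 0) := by
  have hL := memL_length n w hw
  rw [DD, Finset.mem_filter, Finset.mem_Icc]
  constructor
  · rintro ⟨⟨h1, h2⟩, h3⟩
    exact ⟨h1, h2, (onDiag_iff_S w t (by omega)).1 h3⟩
  · rintro ⟨h1, h2, h3⟩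
    exact ⟨⟨h1, h2⟩, (onDiag_iff_S w t (by omega)).2 h3⟩

lemma cc_eq_or (n : ℕ) (w : List Bool) (j : ℕ) (hw : memL n w) :
    cc n w (j+1) = cc n w j ∨ S w (j+1) = 0 := by
  by_cases hj : ∃ t ∈ DD n w, 2*t = j+1
  · right
    obtain ⟨t, ht, h2t⟩ := hj
    rw [← h2t]
    exact ((mem_DD n w t hw).1 ht).2.2
  · left
    push_neg at hj
    rw [cc, cc]
    congr 1
    ext t
    simp only [Finset.mem_filter]
    constructor
    · rintro ⟨h1, h2⟩
      refine ⟨h1, ?_⟩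
      have := hj t h1
      omega
    · rintro ⟨h1, h2⟩
      exact ⟨h1, by omega⟩

lemma S_F (n : ℕ) (w : List Bool) (hw : memL n w) :
    ∀ j, j ≤ w.length → S (F n w) j = if Even (cc n w j) then S w j else -S w j := by
  intro j
  induction j with
  | zero => intro _; simp [S_zero, cc_zero]
  | succ j ih =>
    intro hj1
    have hjlen : j < w.length := by omega
    have hstep := S_succ (F n w) j (by rw [F_length]; exact hjlen)
    have hwstep := S_succ w j hjlen
    rw [F_getElem n w j hjlen] at hstep
    have ihj := ih (by omega)
    rcases cc_eq_or n w j hw with hcc | hS0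
    · rw [hcc]
      by_cases hp : Even (cc n w j)
      · rw [if_pos hp] at ihj hstep ⊢
        rcases hb : w[j] <;> rw [hb] at hstep hwstep <;> simp at hstep hwstep <;> omega
      · rw [if_neg hp] at ihj hstep ⊢
        rcases hb : w[j] <;> rw [hb] at hstep hwstep <;> simp at hstep hwstep <;> omega
    · have h1 : S (F n w) (j+1) = 0 := by
        by_cases hp : Even (cc n w j)
        · rw [if_pos hp] at ihj hstep
          rcases hb : w[j] <;> rw [hb] at hstep hwstep <;> simp at hstep hwstep <;> omega
        · rw [if_neg hp] at ihj hstep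
          rcases hb : w[j] <;> rw [hb] at hstep hwstep <;> simp at hstep hwstep <;> omega
      rw [h1, hS0]
      simp

lemma F_memL (n : ℕ) (w : List Bool) (hw : memL n w) : memL n (F n w) := by
  have hL := memL_length n w hw
  apply memL_of_S n _ (by rw [F_length]; exact hL)
  have := S_F n w hw (2*n) (by omega)
  have h0 := memL_S n w hw
  rw [this, h0]
  simp

lemma DD_F (n : ℕ) (w : List Bool) (hw : memL n w) : DD n (F n w) = DD n w := by
  have hL := memL_length n w hw
  ext t
  rw [mem_DD n _ t (F_memL n w hw), mem_DD n w t hw]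
  constructor <;> rintro ⟨h1, h2, h3⟩ <;> refine ⟨h1, h2, ?_⟩ <;>
    have hS := S_F n w hw (2*t) (by omega)
  · rw [hS] at h3
    by_cases hp : Even (cc n w (2*t)) <;> [rw [if_pos hp] at h3; rw [if_neg hp] at h3] <;> omega
  · rw [hS, h3]
    simp

lemma cc_F (n : ℕ) (w : List Bool) (hw : memL n w) (j : ℕ) : cc n (F n w) j = cc n w j := by
  rw [cc, cc, DD_F n w hw]

lemma F_F (n : ℕ) (w : List Bool) (hw : memL n w) : F n (F n w) = w := by
  apply List.ext_getElem (by rw [F_length, F_length])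
  intro j h1 h2
  have hjl : j < w.length := h2
  have hjF : j < (F n w).length := by rw [F_length]; exact hjl
  rw [F_getElem n (F n w) j hjF, cc_F n w hw j, F_getElem n w j hjl]
  by_cases hp : Even (cc n w j) <;> simp [hp]

lemma cross_F_eq_bounce (n : ℕ) (w : List Bool) (hw : memL n w) :
    crossCount n (F n w) = bounceCount n w := by
  have hL := memL_length n w hw
  rw [crossCount, bounceCount]
  congr 1
  ext i
  simp only [Finset.mem_filter, Finset.mem_Icc]
  by_cases hi : 1 ≤ i ∧ i ≤ n - 1
  · obtain ⟨hi1, hin⟩ := hi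
    simp only [hi1, hin, true_and]
    have hd : onDiag (F n w) i ↔ onDiag w i := by
      have := DD_F n w hw
      rw [DD, DD] at this
      have h1 := Finset.ext_iff.1 this i
      simp only [Finset.mem_filter, Finset.mem_Icc, hi1, hin, true_and, and_true] at h1
      exact h1
    rw [hd]
    by_cases hdiag : onDiag w i
    · simp only [eq_true hdiag, true_and]
      have hiD : i ∈ DD n w := by
        rw [DD, Finset.mem_filter, Finset.mem_Icc]; exact ⟨⟨hi1, hin⟩, hdiag⟩
      -- cc n w (2*i) = cc n w (2*i-1) + 1
      have hcc : cc n w (2*i) = cc n w (2*i-1) + 1 := by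
        rw [cc, cc]
        have hset : (DD n w).filter (fun t => 2*t ≤ 2*i)
            = insert i ((DD n w).filter (fun t => 2*t ≤ 2*i-1)) := by
          ext t
          simp only [Finset.mem_filter, Finset.mem_insert]
          constructor
          · rintro ⟨h1, h2⟩
            by_cases hti : t = i
            · exact Or.inl hti
            · exact Or.inr ⟨h1, by omega⟩
          · rintro (rfl | ⟨h1, h2⟩)
            · exact ⟨hiD, le_rfl⟩
            · exact ⟨h1, by omega⟩
        rw [hset, Finset.card_insert_of_notMem]
        simp only [Finset.mem_filter]
        rintro ⟨_, hle⟩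
        omega
      have hm1 : 2*i-1 < w.length := by omega
      have hm2 : 2*i < w.length := by omega
      rw [List.getD_eq_getElem _ _ (by rw [F_length]; exact hm1),
          List.getD_eq_getElem _ _ (by rw [F_length]; exact hm2),
          List.getD_eq_getElem _ _ hm1, List.getD_eq_getElem _ _ hm2,
          F_getElem n w _ hm1, F_getElem n w _ hm2, hcc]
      by_cases hp : Even (cc n w (2*i-1))
      · rw [if_pos hp, if_neg (by simp [Nat.even_add_one, hp])]
        rcases w[2*i-1] <;> rcases w[2*i] <;> simp
      · rw [if_neg hp, if_pos (by simp [Nat.even_add_one, hp])]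
        rcases w[2*i-1] <;> rcases w[2*i] <;> simp
    · simp only [eq_false hdiag, false_and]
  · constructor <;> rintro ⟨⟨h1, h2⟩, _⟩ <;> exact absurd ⟨h1, h2⟩ hi

lemma words_finite (m k : ℕ) : {u : List Bool | u.length = m ∧ u.count true = k}.Finite :=
  (List.finite_length_eq Bool m).subset (fun u hu => hu.1)

lemma words_ncard : ∀ m k : ℕ, {u : List Bool | u.length = m ∧ u.count true = k}.ncard
    = m.choose k := by
  intro m
  induction m with
  | zero =>
    intro k
    cases k with
    | zero =>
      have : {u : List Bool | u.length = 0 ∧ u.count true = 0} = {([] : List Bool)} := by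
        ext u
        simp only [Set.mem_setOf_eq, Set.mem_singleton_iff, List.length_eq_zero_iff]
        constructor
        · rintro ⟨rfl, _⟩; rfl
        · rintro rfl; simp
      rw [this, Set.ncard_singleton]
      rfl
    | succ k =>
      have : {u : List Bool | u.length = 0 ∧ u.count true = k+1} = ∅ := by
        ext u
        simp only [Set.mem_setOf_eq, Set.mem_empty_iff_false, iff_false, List.length_eq_zero_iff]
        rintro ⟨rfl, h⟩
        simp at h
      rw [this, Set.ncard_empty]
      rfl
  | succ m ih =>
    intro k
    cases k with
    | zero =>
      have : {u : List Bool | u.length = m+1 ∧ u.count true = 0}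
          = (fun v => false :: v) '' {u : List Bool | u.length = m ∧ u.count true = 0} := by
        ext u
        simp only [Set.mem_setOf_eq, Set.mem_image]
        constructor
        · rintro ⟨hlen, hcnt⟩
          cases u with
          | nil => simp at hlen
          | cons a v =>
            cases a
            · exact ⟨v, ⟨by simpa using hlen, by simpa using hcnt⟩, rfl⟩
            · simp [List.count_cons] at hcnt
        · rintro ⟨v, ⟨hlen, hcnt⟩, rfl⟩
          simp [hlen, List.count_cons, hcnt]
      rw [this, Set.ncard_image_of_injective _ (List.cons_injective), ih 0]
      simp
    | succ k =>
      have hdecomp : {u : List Bool | u.length = m+1 ∧ u.count true = k+1}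
          = ((fun v => true :: v) '' {u : List Bool | u.length = m ∧ u.count true = k})
            ∪ ((fun v => false :: v) '' {u : List Bool | u.length = m ∧ u.count true = k+1}) := by
        ext u
        simp only [Set.mem_setOf_eq, Set.mem_union, Set.mem_image]
        constructor
        · rintro ⟨hlen, hcnt⟩
          cases u with
          | nil => simp at hlen
          | cons a v =>
            cases a
            · exact Or.inr ⟨v, ⟨by simpa using hlen, by simpa [List.count_cons] using hcnt⟩, rfl⟩
            · exact Or.inl ⟨v, ⟨by simpa using hlen, by simpa [List.count_cons] using hcnt⟩, rfl⟩
        · rintro (⟨v, ⟨hlen, hcnt⟩, rfl⟩ | ⟨v, ⟨hlen, hcnt⟩, rfl⟩) <;>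
            simp [hlen, List.count_cons, hcnt]
      rw [hdecomp, Set.ncard_union_eq ?disj ?f1 ?f2]
      case disj =>
        rw [Set.disjoint_left]
        rintro u ⟨v, _, rfl⟩ ⟨v', _, hc⟩
        simp at hc
      case f1 => exact ((words_finite m k).image _)
      case f2 => exact ((words_finite m (k+1)).image _)
      rw [Set.ncard_image_of_injective _ (List.cons_injective),
          Set.ncard_image_of_injective _ (List.cons_injective), ih k, ih (k+1)]
      rw [Nat.choose_succ_succ]

lemma psi_mem (n : ℕ) (hn : 1 ≤ n) (b : Bool) (u : List Bool)
    (hu : u.length = 2*n-2 ∧ u.count true = n-1) :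
    memL n (b :: (u ++ [!b])) ∧ (b :: (u ++ [!b])).getD 0 false ≠ (b :: (u ++ [!b])).getD (2*n-1) false := by
  obtain ⟨hlen, hcnt⟩ := hu
  have hlenv : (b :: (u ++ [!b])).length = 2*n := by simp [hlen]; omega
  have hc : (b :: (u ++ [!b])).count true = n := by
    cases b <;> simp [List.count_cons, List.count_append, hcnt] <;> omega
  refine ⟨(memL_iff n _).2 ⟨hlenv, hc⟩, ?_⟩
  have h1 : (b :: (u ++ [!b])).getD 0 false = b := rfl
  have h2 : (b :: (u ++ [!b])).getD (2*n-1) false = !b := by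
    rw [List.getD_eq_getElem?_getD]
    have e : b :: (u ++ [!b]) = (b :: u) ++ [!b] := by simp
    rw [e, List.getElem?_append_right (by simp [hlen]; omega),
      show 2*n-1 - (b :: u).length = 0 by simp [hlen]; omega]
    rfl
  rw [h1, h2]
  cases b <;> simp

lemma psi_mem_inv (n : ℕ) (hn : 1 ≤ n) (v : List Bool)
    (hv : memL n v ∧ v.getD 0 false ≠ v.getD (2*n-1) false) :
    ∃ b u, u.length = 2*n-2 ∧ u.count true = n-1 ∧ v = b :: (u ++ [!b]) := by
  obtain ⟨hm, hne⟩ := hv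
  have hL : v.length = 2*n := memL_length n v hm
  rcases v with _ | ⟨a, w'⟩
  · simp at hL; omega
  rcases List.eq_nil_or_concat w' with rfl | ⟨u, c, rfl⟩
  · simp at hL; omega
  rw [List.concat_eq_append] at *
  have hulen : u.length = 2*n-2 := by simp at hL; omega
  have h1 : (a :: (u ++ [c])).getD 0 false = a := rfl
  have h2 : (a :: (u ++ [c])).getD (2*n-1) false = c := by
    rw [List.getD_eq_getElem?_getD]
    have e : a :: (u ++ [c]) = (a :: u) ++ [c] := by simp
    rw [e, List.getElem?_append_right (by simp [hulen]; omega),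
      show 2*n-1 - (a :: u).length = 0 by simp [hulen]; omega]
    rfl
  rw [h1, h2] at hne
  have hcb : c = !a := by cases a <;> cases c <;> simp_all
  refine ⟨a, u, hulen, ?_, by rw [hcb]⟩
  have hc := ((memL_iff n _).1 hm).2
  cases a <;> rw [hcb] at hc <;> simp [List.count_cons, List.count_append] at hc <;> omega

lemma T_ncard (n : ℕ) (hn : 1 ≤ n) :
    {v : List Bool | memL n v ∧ v.getD 0 false ≠ v.getD (2*n-1) false}.ncard
      = 2 * (2*n-2).choose (n-1) := by
  classical
  set A := {u : List Bool | u.length = 2*n-2 ∧ u.count true = n-1} with hA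
  have hdecomp : {v : List Bool | memL n v ∧ v.getD 0 false ≠ v.getD (2*n-1) false}
      = ((fun u => true :: (u ++ [false])) '' A) ∪ ((fun u => false :: (u ++ [true])) '' A) := by
    ext v
    simp only [Set.mem_setOf_eq, Set.mem_union, Set.mem_image]
    constructor
    · intro hv
      obtain ⟨b, u, h1, h2, rfl⟩ := psi_mem_inv n hn v hv
      cases b
      · exact Or.inr ⟨u, ⟨h1, h2⟩, rfl⟩
      · exact Or.inl ⟨u, ⟨h1, h2⟩, rfl⟩
    · rintro (⟨u, hu, rfl⟩ | ⟨u, hu, rfl⟩)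
      · exact (Bool.not_true ▸ psi_mem n hn true u hu)
      · exact (Bool.not_false ▸ psi_mem n hn false u hu)
  have hinj : ∀ b c : Bool, Function.Injective (fun u : List Bool => b :: (u ++ [c])) := by
    intro b c u1 u2 h
    simp only [List.cons.injEq, List.append_left_inj] at h
    exact h.2
  rw [hdecomp, Set.ncard_union_eq ?disj ?f1 ?f2]
  case disj =>
    rw [Set.disjoint_left]
    rintro v ⟨u, _, rfl⟩ ⟨u', _, hc⟩
    simp at hc
  case f1 => exact ((words_finite (2*n-2) (n-1)).image _)
  case f2 => exact ((words_finite (2*n-2) (n-1)).image _)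
  rw [Set.ncard_image_of_injective _ (hinj true false),
      Set.ncard_image_of_injective _ (hinj false true)]
  have := words_ncard (2*n-2) (n-1)
  rw [hA]
  omega

end EvenBounce2

open EvenBounce EvenBounce2 in
theorem count_even_bounces (n : ℕ) (hn : 1 ≤ n) :
    {w : List Bool | memL n w ∧ Even (bounceCount n w)}.ncard
      = 2 * (2*n-2).choose (n-1) := by
  classical
  have himg : F n '' {w | memL n w ∧ Even (bounceCount n w)}
      = {v | memL n v ∧ v.getD 0 false ≠ v.getD (2*n-1) false} := by
    ext v
    simp only [Set.mem_image, Set.mem_setOf_eq]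
    constructor
    · rintro ⟨w, ⟨hw, heven⟩, rfl⟩
      refine ⟨F_memL n w hw, ?_⟩
      rw [← cross_parity n hn (F n w) (F_memL n w hw), cross_F_eq_bounce n w hw]
      exact heven
    · rintro ⟨hv, hne⟩
      refine ⟨F n v, ⟨F_memL n v hv, ?_⟩, F_F n v hv⟩
      have hb := (cross_F_eq_bounce n (F n v) (F_memL n v hv)).symm
      rw [F_F n v hv] at hb
      rw [hb]
      exact (cross_parity n hn v hv).2 hne
  have hinj : Set.InjOn (F n) {w | memL n w ∧ Even (bounceCount n w)} := by
    intro w1 h1 w2 h2 heq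
    have := congrArg (F n) heq
    rwa [F_F n w1 h1.1, F_F n w2 h2.1] at this
  rw [← Set.ncard_image_of_injOn hinj, himg]
  exact T_ncard n hn
end

section
/- For every n ≥ 1 and every k ≥ 0, the number of words L ∈ 𝓛_n that touch the diagonal with a north step exactly k times equals the number of words L ∈ 𝓛_n that cross the diagonal exactly k times. -/
/-- The number of touchings of the diagonal with a north step: interior diagonal
points `[i,i]` with `w_{2i} = N`. -/
def touchNorthCount (n : ℕ) (w : List Bool) : ℕ :=
  ((Finset.Icc 1 (n-1)).filter (fun i =>
    onDiag w i ∧ w.getD (2*i-1) true = false)).card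

namespace CT

def hgt (w : List Bool) : ℤ := (w.count true : ℤ) - (w.count false : ℤ)

def dlt (x : Bool) : ℤ := if x then 1 else -1

lemma length_eq_counts (l : List Bool) : l.length = l.count true + l.count false := by
  induction l with
  | nil => rfl
  | cons x xs ih =>
    rw [List.count_cons, List.count_cons, List.length_cons, ih]
    cases x <;> simp <;> omega

lemma hgt_nil : hgt [] = 0 := rfl

lemma hgt_cons (x : Bool) (xs : List Bool) : hgt (x :: xs) = dlt x + hgt xs := by
  cases x <;> simp [hgt, dlt, List.count_cons] <;> push_cast <;> ring

lemma hgt_append (u v : List Bool) : hgt (u ++ v) = hgt u + hgt v := by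
  simp [hgt, List.count_append]; push_cast; ring

lemma hgt_map_not (w : List Bool) : hgt (w.map (fun b => !b)) = - hgt w := by
  induction w with
  | nil => rfl
  | cons x xs ih => rw [List.map_cons, hgt_cons, hgt_cons, ih]; cases x <;> simp [dlt] <;> ring

lemma hgt_map_xor (w : List Bool) (c : Bool) :
    hgt (w.map (· ^^ c)) = if c then - hgt w else hgt w := by
  cases c
  · simp
  · rw [← hgt_map_not w]; simp [Bool.xor_true]

lemma hgt_take_succ (w : List Bool) (l : ℕ) (h : l < w.length) (d : Bool) :
    hgt (w.take (l+1)) = hgt (w.take l) + dlt (w.getD l d) := by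
  rw [List.take_succ, List.getD_eq_getElem w d h, hgt_append]
  have : w[l]?.toList = [w[l]] := by
    rw [List.getElem?_eq_getElem h]; rfl
  rw [this, hgt_cons, hgt_nil]; ring

lemma dlt_abs (x : Bool) : dlt x = 1 ∨ dlt x = -1 := by cases x <;> simp [dlt]

def phi : ℤ → Bool → Bool → List Bool → List Bool
  | _, _, _, [] => []
  | d, c, r, x :: xs =>
    if d = 0 then (x ^^ c) :: phi (dlt x) (x ^^ c) c xs
    else (x ^^ r) :: phi (d + dlt x) c r xs

def psi : ℤ → Bool → Bool → List Bool → List Bool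
  | _, _, _, [] => []
  | e, c, r, y :: ys =>
    if e = 0 then (y ^^ c) :: psi (dlt y) y c ys
    else (y ^^ r) :: psi (e + dlt y) c r ys

lemma dlt_xor (y c : Bool) : dlt (y ^^ c) = if c then - dlt y else dlt y := by
  cases y <;> cases c <;> simp [dlt]


lemma phi_cons_zero (c r x : Bool) (xs : List Bool) :
    phi 0 c r (x :: xs) = (x ^^ c) :: phi (dlt x) (x ^^ c) c xs := by
  simp [phi]

lemma phi_cons_ne {d : ℤ} (hd : d ≠ 0) (c r x : Bool) (xs : List Bool) :
    phi d c r (x :: xs) = (x ^^ r) :: phi (d + dlt x) c r xs := by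
  rw [phi, if_neg hd]

lemma psi_cons_zero (c r y : Bool) (ys : List Bool) :
    psi 0 c r (y :: ys) = (y ^^ c) :: psi (dlt y) y c ys := by
  simp [psi]

lemma psi_cons_ne {e : ℤ} (he : e ≠ 0) (c r y : Bool) (ys : List Bool) :
    psi e c r (y :: ys) = (y ^^ r) :: psi (e + dlt y) c r ys := by
  rw [psi, if_neg he]

lemma xor_cancel (a b : Bool) : ((a ^^ b) ^^ b) = a := by
  cases a <;> cases b <;> rfl

lemma dlt_not (x : Bool) : dlt (!x) = - dlt x := by cases x <;> simp [dlt]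

lemma psi_phi (xs : List Bool) : ∀ (d : ℤ) (c r : Bool),
    psi (if r then -d else d) c r (phi d c r xs) = xs := by
  induction xs with
  | nil => intro d c r; simp [phi, psi]
  | cons x xs ih =>
    intro d c r
    by_cases hd : d = 0
    · subst hd
      have he : (if r then -(0:ℤ) else 0) = 0 := by cases r <;> norm_num
      rw [he, phi_cons_zero, psi_cons_zero]
      congr 1
      · cases x <;> cases c <;> rfl
      · have h := ih (dlt x) (x ^^ c) c
        rwa [← dlt_xor] at h
    · have he : (if r then -d else d) ≠ 0 := by cases r <;> simpa using hd
      rw [phi_cons_ne hd, psi_cons_ne he]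
      congr 1
      · cases x <;> cases r <;> rfl
      · have h := ih (d + dlt x) c r
        have harg : (if r then -d else d) + dlt (x ^^ r) = (if r then -(d + dlt x) else d + dlt x) := by
          cases r <;> simp [dlt_xor, dlt_not] <;> ring
        rw [harg]
        exact h

lemma phi_psi (ys : List Bool) : ∀ (e : ℤ) (c r : Bool),
    phi (if r then -e else e) c r (psi e c r ys) = ys := by
  induction ys with
  | nil => intro e c r; simp [phi, psi]
  | cons y ys ih =>
    intro e c r
    by_cases he : e = 0
    · subst he
      have hd : (if r then -(0:ℤ) else 0) = 0 := by cases r <;> norm_num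
      rw [hd, psi_cons_zero, phi_cons_zero]
      rw [xor_cancel]
      congr 1
      have h := ih (dlt y) y c
      rwa [← dlt_xor] at h
    · have hd : (if r then -e else e) ≠ 0 := by cases r <;> simpa using he
      rw [psi_cons_ne he, phi_cons_ne hd]
      congr 1
      · cases y <;> cases r <;> rfl
      · have h := ih (e + dlt y) c r
        have harg : (if r then -e else e) + dlt (y ^^ r) = (if r then -(e + dlt y) else e + dlt y) := by
          cases r <;> simp [dlt_xor, dlt_not] <;> ring
        rw [harg]
        exact h

lemma psi_phi0 (xs : List Bool) (c : Bool) : psi 0 c false (phi 0 c false xs) = xs := by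
  have := psi_phi xs 0 c false; simpa using this

lemma phi_psi0 (ys : List Bool) (c : Bool) : phi 0 c false (psi 0 c false ys) = ys := by
  have := phi_psi ys 0 c false; simpa using this

lemma getD_map (f : Bool → Bool) (l : List Bool) (i : ℕ) (h : i < l.length) (d d' : Bool) :
    (l.map f).getD i d = f (l.getD i d') := by
  rw [List.getD_eq_getElem _ _ (by simpa using h), List.getD_eq_getElem _ _ h, List.getElem_map]

lemma phi_no_zero : ∀ (u : List Bool) (d : ℤ) (c r : Bool) (rest : List Bool),
    (∀ l, l < u.length → d + hgt (u.take l) ≠ 0) →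
    phi d c r (u ++ rest) = u.map (· ^^ r) ++ phi (d + hgt u) c r rest := by
  intro u
  induction u with
  | nil => intro d c r rest h; simp [hgt_nil]
  | cons x u ih =>
    intro d c r rest h
    have hd : d ≠ 0 := by
      have := h 0 (by simp)
      simpa [hgt_nil] using this
    rw [List.cons_append, phi_cons_ne hd, ih (d + dlt x) c r rest ?_]
    · have harg : d + dlt x + hgt u = d + hgt (x :: u) := by rw [hgt_cons]; ring
      rw [harg, List.map_cons, List.cons_append]
    · intro l hl
      have h2 := h (l+1) (by simpa using Nat.succ_lt_succ hl)
      rw [List.take_succ_cons, hgt_cons] at h2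
      intro hc; apply h2; linarith

def Prim (u : List Bool) : Prop :=
  u ≠ [] ∧ hgt u = 0 ∧ ∀ l, 0 < l → l < u.length → hgt (u.take l) ≠ 0

lemma exists_split (xs : List Bool)
    (hex : ∃ l, 0 < l ∧ l ≤ xs.length ∧ hgt (xs.take l) = 0) :
    ∃ u v, xs = u ++ v ∧ Prim u := by
  classical
  obtain ⟨hm0, hmle, hmz⟩ := Nat.find_spec hex
  refine ⟨xs.take (Nat.find hex), xs.drop (Nat.find hex),
    (List.take_append_drop _ xs).symm, ?_, hmz, ?_⟩
  · intro h
    have h2 : (xs.take (Nat.find hex)).length = 0 := by rw [h]; rfl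
    rw [List.length_take] at h2
    omega
  · intro l hl0 hllen
    rw [List.length_take] at hllen
    have hlm : l < Nat.find hex := lt_of_lt_of_le hllen (min_le_left _ _)
    rw [List.take_take, min_eq_left hlm.le]
    intro hc
    exact Nat.find_min hex hlm ⟨hl0, le_trans hlm.le hmle, hc⟩

lemma eq_not_of_dlt (a b : Bool) (h : dlt a = - dlt b) : a = !b := by
  cases a <;> cases b <;> simp [dlt] at h ⊢ <;> omega

lemma prim_sign (x : Bool) (u : List Bool) (h : Prim (x :: u)) :
    ∀ l, 0 < l → l < (x::u).length → 0 < dlt x * hgt ((x::u).take l) := by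
  intro l
  induction l with
  | zero => intro h0; omega
  | succ l ih =>
    intro _ hlen
    by_cases hl0 : l = 0
    · subst hl0
      have h1 : (x::u).take 1 = [x] := rfl
      rw [h1, hgt_cons, hgt_nil]
      rcases dlt_abs x with h2 | h2 <;> rw [h2] <;> norm_num
    · have hprev := ih (Nat.pos_of_ne_zero hl0) (by omega)
      have hne := h.2.2 (l+1) (by omega) hlen
      have hstep := hgt_take_succ (x::u) l (by omega) false
      rcases dlt_abs ((x::u).getD l false) with h1 | h1 <;> rw [h1] at hstep <;>
        rcases dlt_abs x with h2 | h2 <;> rw [h2] at hprev ⊢ <;>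
        simp only [one_mul, neg_one_mul] at hprev ⊢ <;> omega

lemma prim_last (x : Bool) (u : List Bool) (h : Prim (x :: u)) :
    (x :: u).getD ((x::u).length - 1) false = !x := by
  have hlen2 : 2 ≤ (x::u).length := by
    rcases u with _ | ⟨y, u'⟩
    · exfalso
      have h2 := h.2.1
      rw [hgt_cons, hgt_nil] at h2
      rcases dlt_abs x with h1 | h1 <;> omega
    · simp
  have hL : (x::u).length - 1 < (x::u).length := by omega
  have hstep := hgt_take_succ (x::u) ((x::u).length - 1) hL false
  have hwhole : (x::u).take (((x::u).length - 1)+1) = x::u := by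
    rw [Nat.sub_add_cancel (by omega)]
    exact List.take_length
  rw [hwhole, h.2.1] at hstep
  have hsign := prim_sign x u h ((x::u).length - 1) (by omega) hL
  refine eq_not_of_dlt _ _ ?_
  rcases dlt_abs x with h1 | h1 <;>
    rcases dlt_abs ((x::u).getD ((x::u).length - 1) false) with h2 | h2 <;>
    rw [h1] at hsign ⊢ <;> rw [h2] at hstep ⊢ <;>
    simp only [one_mul, neg_one_mul] at hsign ⊢ <;> omega

lemma phi_arch (x : Bool) (u' rest : List Bool) (c r : Bool) (h : Prim (x :: u')) :
    phi 0 c r ((x :: u') ++ rest) =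
      ((x :: u').map (· ^^ c)) ++ phi 0 (x ^^ c) c rest := by
  rw [List.cons_append, phi_cons_zero, phi_no_zero u' (dlt x) (x ^^ c) c rest ?_]
  · have hz : dlt x + hgt u' = 0 := by
      have := h.2.1; rw [hgt_cons] at this; linarith
    rw [hz, List.map_cons, List.cons_append]
  · intro l hl
    have h2 := h.2.2 (l+1) (by omega) (by simpa using Nat.succ_lt_succ hl)
    rwa [List.take_succ_cons, hgt_cons] at h2

lemma main : ∀ (N : ℕ) (xs : List Bool), xs.length ≤ N → ∀ (c r : Bool),
    (phi 0 c r xs).length = xs.length ∧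
    (∀ l, (hgt ((phi 0 c r xs).take l) = 0 ↔ hgt (xs.take l) = 0)) ∧
    (∀ j, 0 < j → j < xs.length → hgt (xs.take j) = 0 →
       ((phi 0 c r xs).getD (j-1) false = (phi 0 c r xs).getD j false ↔
         xs.getD j false = true)) := by
  intro N
  induction N with
  | zero =>
    intro xs hlen c r
    have hnil : xs = [] := List.length_eq_zero_iff.mp (by omega)
    subst hnil
    refine ⟨rfl, by simp [phi], by simp⟩
  | succ N ih =>
    intro xs hlen c r
    by_cases hex : ∃ l, 0 < l ∧ l ≤ xs.length ∧ hgt (xs.take l) = 0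
    · obtain ⟨u, v, rfl, hu⟩ := exists_split xs hex
      rcases u with _ | ⟨x, u'⟩
      · exact absurd rfl hu.1
      set U : List Bool := x :: u' with hU
      have hULpos : 0 < U.length := by simp [hU]
      have hvlen : v.length ≤ N := by
        have := @List.length_append _ U v ▸ hlen
        simp [hU] at this ⊢
        omega
      obtain ⟨ihlen, ihtake, ihpred⟩ := ih v hvlen (x ^^ c) c
      set Q : List Bool := phi 0 (x ^^ c) c v with hQ
      have harch : phi 0 c r (U ++ v) = U.map (· ^^ c) ++ Q := phi_arch x u' v c r hu
      set A : List Bool := U.map (· ^^ c) with hA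
      have hAlen : A.length = U.length := by simp [hA]
      have hgtA : ∀ l, hgt (A.take l) = if c then - hgt (U.take l) else hgt (U.take l) := by
        intro l
        rw [hA, ← List.map_take, hgt_map_xor]
      refine ⟨?_, ?_, ?_⟩
      · rw [harch]
        simp [hA, ihlen]
      · intro l
        rw [harch, List.take_append, List.take_append,
          hgt_append, hgt_append, hgtA, hAlen]
        by_cases hl : l ≤ U.length
        · have h0 : l - U.length = 0 := by omega
          rw [h0]
          simp only [List.take_zero, hgt_nil, add_zero]
          cases c <;> simp
        · have hUfull : U.take l = U := List.take_of_length_le (by omega)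
          rw [hUfull, hu.2.1]
          have hQl := ihtake (l - U.length)
          cases c <;> simpa using hQl
      · intro j hj0 hjlen hjz
        rcases lt_trichotomy j U.length with hj | hj | hj
        · exfalso
          rw [List.take_append_of_le_length hj.le] at hjz
          exact hu.2.2 j hj0 hj hjz
        · -- boundary
          subst hj
          have hvne : v ≠ [] := by
            intro hv
            rw [hv] at hjlen
            simp at hjlen
          rcases v with _ | ⟨y, v'⟩
          · exact absurd rfl hvne
          rw [harch]
          have hQ0 : Q = (y ^^ (x ^^ c)) :: phi (dlt y) (y ^^ (x ^^ c)) (x ^^ c) v' := by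
            rw [hQ, phi_cons_zero]
          have e1 : (A ++ Q).getD (U.length-1) false = A.getD (U.length-1) false :=
            List.getD_append _ _ _ _ (by omega)
          have e2 : (A ++ Q).getD U.length false = Q.getD 0 false := by
            rw [List.getD_append_right _ _ _ _ (show A.length ≤ U.length by omega)]
            have h0 : U.length - A.length = 0 := by omega
            rw [h0]
          have e3 : (U ++ (y :: v')).getD U.length false = y := by
            rw [List.getD_append_right _ _ _ _ le_rfl]
            simp
          have e4 : A.getD (U.length-1) false = ((U.getD (U.length-1) false) ^^ c) := by
            rw [hA]
            exact getD_map _ _ _ (by omega) _ _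
          have e5 : U.getD (U.length-1) false = !x := by
            rw [hU]
            exact prim_last x u' hu
          rw [e1, e2, e3, e4, e5, hQ0]
          simp only [List.getD_cons_zero]
          cases x <;> cases y <;> cases c <;> simp
        · -- j > U.length
          have hz' : hgt (v.take (j - U.length)) = 0 := by
            rw [List.take_append,
              List.take_of_length_le (by omega : U.length ≤ j), hgt_append, hu.2.1] at hjz
            linarith
          have hjv : j - U.length < v.length := by
            rw [List.length_append] at hjlen
            omega
          have hmainv := ihpred (j - U.length) (by omega) hjv hz'
          rw [harch]
          have e1 : (A ++ Q).getD (j-1) false = Q.getD (j - U.length - 1) false := by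
            rw [List.getD_append_right _ _ _ _ (show A.length ≤ j - 1 by omega)]
            congr 1
            omega
          have e2 : (A ++ Q).getD j false = Q.getD (j - U.length) false := by
            rw [List.getD_append_right _ _ _ _ (show A.length ≤ j by omega)]
            congr 1
            omega
          have e3 : (U ++ v).getD j false = v.getD (j - U.length) false :=
            List.getD_append_right _ _ _ _ (by omega)
          rw [e1, e2, e3]
          exact hmainv
    · -- no return at all
      push_neg at hex
      rcases xs with _ | ⟨x, t⟩
      · refine ⟨rfl, by simp [phi], by simp⟩
      have hmap : phi 0 c r (x :: t) = (x :: t).map (· ^^ c) := by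
        have h2 := phi_no_zero t (dlt x) (x ^^ c) c [] ?_
        · rw [List.append_nil] at h2
          rw [phi_cons_zero, h2]
          simp [phi, List.map_cons]
        · intro l hl
          have h3 := hex (l+1) (by omega) (by simpa using Nat.succ_le_succ hl.le)
          rwa [List.take_succ_cons, hgt_cons] at h3
      rw [hmap]
      refine ⟨by simp, ?_, ?_⟩
      · intro l
        rw [← List.map_take, hgt_map_xor]
        cases c <;> simp
      · intro j hj0 hjlen hjz
        exact absurd hjz (hex j hj0 hjlen.le)

lemma hgt_reverse (w : List Bool) : hgt w.reverse = hgt w := by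
  simp [hgt, List.count_reverse]

def rc (w : List Bool) : List Bool := (w.reverse).map (fun b => !b)

lemma count_map_not_true (l : List Bool) : (l.map (fun b => !b)).count true = l.count false := by
  induction l with
  | nil => rfl
  | cons x xs ih => cases x <;> simp [List.count_cons, ih]

lemma count_map_not_false (l : List Bool) : (l.map (fun b => !b)).count false = l.count true := by
  induction l with
  | nil => rfl
  | cons x xs ih => cases x <;> simp [List.count_cons, ih]

lemma rc_count_true (w : List Bool) : (rc w).count true = w.count false := by
  rw [rc, count_map_not_true, List.count_reverse]

lemma rc_count_false (w : List Bool) : (rc w).count false = w.count true := by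
  rw [rc, count_map_not_false, List.count_reverse]

lemma rc_length (w : List Bool) : (rc w).length = w.length := by simp [rc]

lemma rc_hgt (w : List Bool) : hgt (rc w) = - hgt w := by
  rw [rc, hgt_map_not, hgt_reverse]

lemma rc_rc (w : List Bool) : rc (rc w) = w := by
  simp only [rc, ← List.map_reverse, List.reverse_reverse, List.map_map]
  have : ((fun b => !b) ∘ fun b : Bool => !b) = id := by funext b; simp
  rw [this, List.map_id]

lemma rc_getD (w : List Bool) (j : ℕ) (h : j < w.length) (d d' : Bool) :
    (rc w).getD j d = !(w.getD (w.length - 1 - j) d') := by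
  have h1 : j < (rc w).length := by rw [rc_length]; exact h
  have h2 : w.length - 1 - j < w.length := by omega
  rw [List.getD_eq_getElem _ _ h1, List.getD_eq_getElem _ _ h2]
  simp only [rc, List.getElem_map]
  congr 1
  rw [List.getElem_reverse]

lemma hgt_rc_take (w : List Bool) (l : ℕ) (h0 : hgt w = 0) :
    hgt ((rc w).take l) = hgt (w.take (w.length - l)) := by
  rw [rc, ← List.map_take, hgt_map_not, List.take_reverse, hgt_reverse]
  have h2 := hgt_append (w.take (w.length - l)) (w.drop (w.length - l))
  rw [List.take_append_drop, h0] at h2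
  linarith

def F (w : List Bool) : List Bool := phi 0 false false (rc w)

def Finv (w : List Bool) : List Bool := rc (psi 0 false false w)

lemma Finv_F (w : List Bool) : Finv (F w) = w := by
  rw [Finv, F, psi_phi0, rc_rc]

lemma F_Finv (w : List Bool) : F (Finv w) = w := by
  rw [Finv, F, rc_rc, phi_psi0]

lemma F_inj : Function.Injective F :=
  Function.LeftInverse.injective Finv_F

lemma memL_of {n : ℕ} {w : List Bool} (hl : w.length = 2*n) (h0 : hgt w = 0) : memL n w := by
  have hc := length_eq_counts w
  rw [hgt] at h0
  exact ⟨by omega, by omega⟩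

lemma memL_length {n : ℕ} {w : List Bool} (hw : memL n w) : w.length = 2*n := by
  rw [length_eq_counts, hw.1, hw.2]; ring

lemma memL_hgt {n : ℕ} {w : List Bool} (hw : memL n w) : hgt w = 0 := by
  rw [hgt, hw.1, hw.2]; ring

lemma onDiag_iff {n : ℕ} (i : ℕ) (w : List Bool) (hlen : w.length = 2*n) (hi : i ≤ n) :
    onDiag w i ↔ hgt (w.take (2*i)) = 0 := by
  have hl : (w.take (2*i)).length = 2*i := by rw [List.length_take]; omega
  have hc := length_eq_counts (w.take (2*i))
  constructor
  · rintro ⟨h1, h2⟩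
    rw [hgt, h1, h2]; ring
  · intro h
    rw [hgt] at h
    exact ⟨by omega, by omega⟩

lemma stat {n : ℕ} (hn : 1 ≤ n) (w : List Bool) (hw : memL n w) :
    memL n (F w) ∧ crossCount n (F w) = touchNorthCount n w := by
  have hlen := memL_length hw
  have hgtw := memL_hgt hw
  set v := rc w with hv
  have hvlen : v.length = 2*n := by rw [hv, rc_length, hlen]
  have hgtv : hgt v = 0 := by rw [hv, rc_hgt, hgtw]; ring
  obtain ⟨mlen, mtake, mpred⟩ := main v.length v le_rfl false false
  set P := phi 0 false false v with hP
  have hPlen : P.length = 2*n := by rw [mlen, hvlen]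
  have hgtP : hgt P = 0 := by
    have h := mtake v.length
    rw [List.take_of_length_le (le_of_eq mlen), List.take_length] at h
    exact h.mpr hgtv
  have hFP : F w = P := rfl
  refine ⟨by rw [hFP]; exact memL_of hPlen hgtP, ?_⟩
  rw [hFP]
  have key1 : ∀ i, 1 ≤ i → i ≤ n-1 → (hgt (v.take (2*i)) = 0 ↔ onDiag w (n - i)) := by
    intro i h1 h2
    have e : w.length - 2*i = 2*(n-i) := by omega
    rw [hv, hgt_rc_take w _ hgtw, e, ← onDiag_iff (n-i) w hlen (by omega)]
  have key2 : ∀ i, 1 ≤ i → i ≤ n-1 →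
      ((v.getD (2*i) false = true) ↔ (w.getD (2*(n-i)-1) true = false)) := by
    intro i h1 h2
    have e2 : 2*i < w.length := by omega
    rw [hv, rc_getD w (2*i) e2 false true]
    have e3 : w.length - 1 - 2*i = 2*(n-i) - 1 := by omega
    rw [e3]
    cases w.getD (2*(n-i)-1) true <;> simp
  have hstep1 : crossCount n P
      = ((Finset.Icc 1 (n-1)).filter
          (fun i => hgt (v.take (2*i)) = 0 ∧ v.getD (2*i) false = true)).card := by
    unfold crossCount
    congr 1
    apply Finset.filter_congr
    intro i hi
    simp only [Finset.mem_Icc] at hi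
    have hOn : onDiag P i ↔ hgt (v.take (2*i)) = 0 :=
      (onDiag_iff i P hPlen (by omega)).trans (mtake (2*i))
    constructor
    · rintro ⟨h1, h2⟩
      have h0 := hOn.mp h1
      exact ⟨h0, (mpred (2*i) (by omega) (by omega) h0).mp h2⟩
    · rintro ⟨h0, h2⟩
      exact ⟨hOn.mpr h0, (mpred (2*i) (by omega) (by omega) h0).mpr h2⟩
  rw [hstep1]
  unfold touchNorthCount
  apply Finset.card_bij' (fun i _ => n - i) (fun i _ => n - i)
  · intro a ha
    simp only [Finset.mem_filter, Finset.mem_Icc] at ha ⊢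
    obtain ⟨⟨ha1, ha2⟩, hb1, hb2⟩ := ha
    exact ⟨⟨by omega, by omega⟩, (key1 a ha1 ha2).mp hb1, (key2 a ha1 ha2).mp hb2⟩
  · intro a ha
    simp only [Finset.mem_filter, Finset.mem_Icc] at ha ⊢
    obtain ⟨⟨ha1, ha2⟩, hb1, hb2⟩ := ha
    have h1 : 1 ≤ n - a := by omega
    have h2 : n - a ≤ n - 1 := by omega
    have e : n - (n - a) = a := by omega
    refine ⟨⟨h1, h2⟩, ?_, ?_⟩
    · exact (key1 (n-a) h1 h2).mpr (by rw [e]; exact hb1)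
    · exact (key2 (n-a) h1 h2).mpr (by rw [e]; exact hb2)
  · intro a ha
    simp only [Finset.mem_filter, Finset.mem_Icc] at ha
    omega
  · intro a ha
    simp only [Finset.mem_filter, Finset.mem_Icc] at ha
    omega

end CT

theorem count_k_north_touchings_eq_count_k_crossings (n : ℕ) (hn : 1 ≤ n) (k : ℕ) :
    {w : List Bool | memL n w ∧ touchNorthCount n w = k}.ncard
      = {w : List Bool | memL n w ∧ crossCount n w = k}.ncard := by
  have himg : CT.F '' {w : List Bool | memL n w ∧ touchNorthCount n w = k}
      = {w : List Bool | memL n w ∧ crossCount n w = k} := by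
    ext w'
    constructor
    · rintro ⟨w, ⟨hmem, htouch⟩, rfl⟩
      obtain ⟨h1, h2⟩ := CT.stat hn w hmem
      exact ⟨h1, by rw [h2, htouch]⟩
    · rintro ⟨hmem', hcross⟩
      have hlen' := CT.memL_length hmem'
      have hgt' := CT.memL_hgt hmem'
      set v := CT.psi 0 false false w' with hv
      have hpv : CT.phi 0 false false v = w' := CT.phi_psi0 w' false
      obtain ⟨mlen, mtake, -⟩ := CT.main v.length v le_rfl false false
      rw [hpv] at mlen
      have hvlen : v.length = 2*n := by rw [← mlen, hlen']
      have hgtv : CT.hgt v = 0 := by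
        have h := mtake v.length
        rw [List.take_length] at h
        rw [← h, List.take_of_length_le (by rw [hpv, mlen]), hpv]
        exact hgt'
      have hmemv : memL n v := CT.memL_of hvlen hgtv
      have hmemrc : memL n (CT.rc v) := by
        refine ⟨?_, ?_⟩
        · rw [CT.rc_count_true]; exact hmemv.2
        · rw [CT.rc_count_false]; exact hmemv.1
      have hFinv : CT.Finv w' = CT.rc v := rfl
      refine ⟨CT.Finv w', ⟨by rw [hFinv]; exact hmemrc, ?_⟩, CT.F_Finv w'⟩
      obtain ⟨-, h2⟩ := CT.stat hn (CT.Finv w') (by rw [hFinv]; exact hmemrc)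
      rw [CT.F_Finv] at h2
      rw [← h2]
      exact hcross
  rw [← himg, Set.ncard_image_of_injective _ CT.F_inj]
end
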